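/- For every a ∈ (0,1), the limit of f(n) as n tends to infinity exists and equals f_∞ = (ln a)/(a − 1). -/

import Mathlib

/-- The reduced identifiability function of the pairwise SIR model:
`f a n = ((a^(1/n) − a^(2/n))/(a^(2/n) − a))·(n−2)`. -/
noncomputable def pwF (a n : ℝ) : ℝ :=
  ((a ^ ((1 : ℝ)/n) - a ^ ((2 : ℝ)/n)) / (a ^ ((2 : ℝ)/n) - a)) * (n - 2)

/-- `f_∞ = (ln a)/(a − 1)`. -/
noncomputable def pwFInf (a : ℝ) : ℝ := Real.log a / (a - 1)

open Filter Real in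
/-- `(exp (c/n) - 1) * n → c` as `n → ∞`, for `c ≠ 0`. -/
lemma exp_sub_one_mul_tendsto (c : ℝ) (hc : c ≠ 0) :
    Tendsto (fun n : ℝ => (Real.exp (c / n) - 1) * n) atTop (nhds c) := by
  have h1 : Tendsto (fun n : ℝ => c / n) atTop (nhds 0) :=
    Tendsto.div_atTop tendsto_const_nhds tendsto_id
  have h1' : Tendsto (fun n : ℝ => c / n) atTop (nhdsWithin 0 {0}ᶜ) := by
    apply tendsto_nhdsWithin_of_tendsto_nhds_of_eventually_within _ h1
    filter_upwards [eventually_gt_atTop 0] with n hn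
    exact div_ne_zero hc (ne_of_gt hn)
  have hslope : Tendsto (fun h : ℝ => (Real.exp h - 1) / h) (nhdsWithin 0 {0}ᶜ) (nhds 1) := by
    have h := Real.hasDerivAt_exp 0
    rw [hasDerivAt_iff_tendsto_slope] at h
    simpa [slope_fun_def, Real.exp_zero, div_eq_inv_mul] using h
  have := (hslope.comp h1').mul_const c
  rw [one_mul] at this
  apply this.congr'
  filter_upwards [eventually_gt_atTop 0] with n hn
  have hn0 : n ≠ 0 := ne_of_gt hn
  simp only [Function.comp_apply]
  field_simp

/-- For every `a ∈ (0,1)`, `f(n) → f_∞ = (ln a)/(a − 1)` as `n → ∞`. -/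
theorem pairwise_f_tendsto_atTop (a : ℝ) (ha0 : 0 < a) (ha1 : a < 1) :
    Filter.Tendsto (pwF a) Filter.atTop (nhds (pwFInf a)) := by
  set L := Real.log a with hLdef
  have hLne : L ≠ 0 := ne_of_lt (Real.log_neg ha0 ha1)
  have h2Lne : (2 : ℝ) * L ≠ 0 := mul_ne_zero two_ne_zero hLne
  -- numerator times n tends to -L
  have hnum : Filter.Tendsto (fun n : ℝ => (a ^ ((1:ℝ)/n) - a ^ ((2:ℝ)/n)) * n)
      Filter.atTop (nhds (-L)) := by
    have h := (exp_sub_one_mul_tendsto L hLne).sub (exp_sub_one_mul_tendsto (2*L) h2Lne)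
    have heq : L - 2*L = -L := by ring
    rw [heq] at h
    apply h.congr'
    filter_upwards [Filter.eventually_gt_atTop 0] with n hn
    have hn0 : n ≠ 0 := ne_of_gt hn
    rw [Real.rpow_def_of_pos ha0, Real.rpow_def_of_pos ha0]
    rw [show Real.log a * ((1:ℝ)/n) = L / n by rw [← hLdef]; ring,
        show Real.log a * ((2:ℝ)/n) = 2*L / n by rw [← hLdef]; ring]
    ring
  -- denominator tends to 1 - a
  have hden : Filter.Tendsto (fun n : ℝ => a ^ ((2:ℝ)/n) - a) Filter.atTop (nhds (1 - a)) := by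
    have h2 : Filter.Tendsto (fun n : ℝ => 2 * L / n) Filter.atTop (nhds 0) :=
      Filter.Tendsto.div_atTop tendsto_const_nhds Filter.tendsto_id
    have hexp : Filter.Tendsto (fun n : ℝ => Real.exp (2 * L / n)) Filter.atTop (nhds 1) := by
      have := (Real.continuous_exp.tendsto 0).comp h2
      simpa [Function.comp_def] using this
    have := hexp.sub (tendsto_const_nhds (x := a))
    apply this.congr
    intro n
    rw [Real.rpow_def_of_pos ha0,
        show Real.log a * ((2:ℝ)/n) = 2*L / n by rw [← hLdef]; ring]
  have hfrac : Filter.Tendsto (fun n : ℝ => (a ^ ((1:ℝ)/n) - a ^ ((2:ℝ)/n)) * n /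
      (a ^ ((2:ℝ)/n) - a)) Filter.atTop (nhds (-L / (1 - a))) :=
    hnum.div hden (by intro h; linarith [sub_eq_zero.mp h])
  have hone : Filter.Tendsto (fun n : ℝ => 1 - 2 / n) Filter.atTop (nhds 1) := by
    have : Filter.Tendsto (fun n : ℝ => (2:ℝ) / n) Filter.atTop (nhds 0) :=
      Filter.Tendsto.div_atTop tendsto_const_nhds Filter.tendsto_id
    simpa using (tendsto_const_nhds (x := (1:ℝ))).sub this
  have hfinal := hfrac.mul hone
  rw [mul_one] at hfinal
  have hval : -L / (1 - a) = pwFInf a := by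
    rw [pwFInf, ← hLdef]
    rw [div_eq_div_iff (by linarith) (by linarith)]
    ring
  rw [hval] at hfinal
  apply hfinal.congr'
  filter_upwards [Filter.eventually_gt_atTop 0] with n hn
  have hn0 : n ≠ 0 := ne_of_gt hn
  rw [pwF, div_mul_eq_mul_div, div_mul_eq_mul_div]
  congr 1
  field_simp
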